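/- arXiv:2605.22603 — 6 statements merged into one kernel-verified Lean document; each statement's English description precedes it below -/
import Mathlib

section
/- Let n ≥ 2, α, β > 0 with α² + β² = 1, and define f_n(γ) := α² + β²γ^n − αβ(1−γ)^{n/2} for γ ∈ [0,1]. Then f_n is strictly increasing on (0,1). Moreover, if α < β (i.e. r := α/β < 1), then f_n(0) < 0 and f_n(1 − r^{2/n}) > 0, so f_n has a unique zero γ₋ in the open interval (0, 1 − r^{2/n}). -/
theorem magic_death_function_monotone_unique_zero
    (n : ℕ) (hn : 2 ≤ n) (α β : ℝ) (hα : 0 < α) (hβ : 0 < β)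
    (hnorm : α ^ 2 + β ^ 2 = 1) (r : ℝ) (hr : r = α / β)
    (f : ℝ → ℝ)
    (hf : f = fun γ => α ^ 2 + β ^ 2 * γ ^ (n : ℝ) - α * β * (1 - γ) ^ ((n : ℝ) / 2)) :
    StrictMonoOn f (Set.Ioo 0 1) ∧
    (α < β →
      f 0 < 0 ∧
      f (1 - r ^ (2 / (n : ℝ))) > 0 ∧
      ∃! γ : ℝ, γ ∈ Set.Ioo (0 : ℝ) (1 - r ^ (2 / (n : ℝ))) ∧ f γ = 0) := by
  have hn0 : (0:ℝ) < (n:ℝ) := by exact_mod_cast Nat.lt_of_lt_of_le (by norm_num) hn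
  have hmono : StrictMonoOn f (Set.Ioo 0 1) := by
    intro x hx y hy hxy
    have h1 : x ^ (n:ℝ) < y ^ (n:ℝ) := Real.rpow_lt_rpow hx.1.le hxy hn0
    have h2 : (1 - y) ^ ((n:ℝ)/2) < (1 - x) ^ ((n:ℝ)/2) :=
      Real.rpow_lt_rpow (by linarith [hy.2]) (by linarith) (by positivity)
    subst hf
    simp only
    nlinarith [mul_pos hα hβ, sq_nonneg β, mul_lt_mul_of_pos_left h1 (pow_pos hβ 2),
      mul_lt_mul_of_pos_left h2 (mul_pos hα hβ)]
  refine ⟨hmono, fun hab => ?_⟩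
  have hr0 : 0 < r := by rw [hr]; positivity
  have hr1 : r < 1 := by rw [hr]; exact (div_lt_one hβ).2 hab
  set s := r ^ (2 / (n:ℝ)) with hs
  have hs0 : 0 < s := Real.rpow_pos_of_pos hr0 _
  have hs1 : s < 1 := Real.rpow_lt_one hr0.le hr1 (by positivity)
  have hf0 : f 0 < 0 := by
    rw [hf]
    simp only
    rw [Real.zero_rpow (by positivity), sub_zero, Real.one_rpow]
    nlinarith
  have hsr : s ^ ((n:ℝ)/2) = r := by
    rw [hs, ← Real.rpow_mul hr0.le, show 2 / (n:ℝ) * ((n:ℝ)/2) = 1 by field_simp]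
    exact Real.rpow_one r
  have hfb : f (1 - s) > 0 := by
    rw [hf]
    simp only
    rw [show (1:ℝ) - (1 - s) = s by ring, hsr]
    have : α * β * r = α ^ 2 := by rw [hr]; field_simp
    rw [this]
    have := Real.rpow_pos_of_pos (show (0:ℝ) < 1 - s by linarith) (n:ℝ)
    nlinarith [mul_pos (pow_pos hβ 2) this]
  refine ⟨hf0, hfb, ?_⟩
  have hcont : Continuous f := by
    rw [hf]
    apply Continuous.sub
    · exact continuous_const.add (continuous_const.mul
        (Real.continuous_rpow_const (by positivity)))
    · exact continuous_const.mul
        ((Real.continuous_rpow_const (by positivity)).comp (continuous_const.sub continuous_id))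
  have hsub : Set.Ioo (0:ℝ) (1 - s) ⊆ Set.Ioo 0 1 := by
    intro x hx; exact ⟨hx.1, by linarith [hx.2]⟩
  have hex : ∃ γ ∈ Set.Ioo (0:ℝ) (1 - s), f γ = 0 := by
    have h := intermediate_value_Ioo (by linarith : (0:ℝ) ≤ 1 - s)
      (hcont.continuousOn : ContinuousOn f (Set.Icc 0 (1 - s)))
    have h0 : (0:ℝ) ∈ Set.Ioo (f 0) (f (1 - s)) := ⟨hf0, hfb⟩
    obtain ⟨γ, hγ, hfγ⟩ := h h0
    exact ⟨γ, hγ, hfγ⟩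
  obtain ⟨γ, hγmem, hγ0⟩ := hex
  refine ⟨γ, ⟨hγmem, hγ0⟩, ?_⟩
  rintro y ⟨hymem, hy0⟩
  exact hmono.injOn (hsub hymem) (hsub hγmem) (by rw [hy0, hγ0])
end

section
/- Let P₀, P_n, c be nonnegative reals with P₀ + P_n > 0, and define Bloch coordinates x := 2c/(P₀+P_n) and z := (P₀−P_n)/(P₀+P_n). Then |x| + |z| > 1 if and only if c > min(P₀, P_n). Moreover, the identity max{0, |x| + |z| − 1}·(P₀+P_n) = 2·max{0, c − P₀, c − P_n} holds. -/
theorem lossless_extraction_identity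
    (P₀ Pn c : ℝ) (hP₀ : 0 ≤ P₀) (hPn : 0 ≤ Pn) (hc : 0 ≤ c)
    (hsum : 0 < P₀ + Pn)
    (x z : ℝ) (hx : x = 2 * c / (P₀ + Pn)) (hz : z = (P₀ - Pn) / (P₀ + Pn)) :
    (|x| + |z| > 1 ↔ c > min P₀ Pn) ∧
    max 0 (|x| + |z| - 1) * (P₀ + Pn) = 2 * max 0 (max (c - P₀) (c - Pn)) := by
  subst hx hz
  have hxabs : |2 * c / (P₀ + Pn)| = 2 * c / (P₀ + Pn) := abs_of_nonneg (by positivity)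
  have key : |2 * c / (P₀ + Pn)| + |(P₀ - Pn) / (P₀ + Pn)|
      = (2 * c + |P₀ - Pn|) / (P₀ + Pn) := by
    rw [hxabs, abs_div, abs_of_pos hsum, add_div]
  rw [key]
  constructor
  · rw [gt_iff_lt, lt_div_iff₀ hsum, one_mul]
    rcases le_total P₀ Pn with h | h
    · rw [abs_of_nonpos (by linarith), min_eq_left h]
      constructor <;> intro <;> linarith
    · rw [abs_of_nonneg (by linarith), min_eq_right h]
      constructor <;> intro <;> linarith
  · rw [max_mul_of_nonneg _ _ hsum.le, zero_mul, sub_mul,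
      div_mul_cancel₀ _ (ne_of_gt hsum), one_mul]
    rcases le_total P₀ Pn with h | h
    · rw [abs_of_nonpos (by linarith)]
      have : max (c - P₀) (c - Pn) = c - P₀ := max_eq_left (by linarith)
      rw [this]
      rcases le_total c P₀ with h2 | h2
      · rw [max_eq_left (by linarith), max_eq_left (by linarith), mul_zero]
      · rw [max_eq_right (by linarith), max_eq_right (by linarith)]; ring
    · rw [abs_of_nonneg (by linarith)]
      have : max (c - P₀) (c - Pn) = c - Pn := max_eq_right (by linarith)
      rw [this]
      rcases le_total c Pn with h2 | h2
      · rw [max_eq_left (by linarith), max_eq_left (by linarith), mul_zero]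
      · rw [max_eq_right (by linarith), max_eq_right (by linarith)]; ring
end

section
/- Let n ≥ 1 and let w : Fin n → ℝ≥0 with ∑ᵢ wᵢ² = 1, and set S := ∑ᵢ wᵢ. If for every index i with wᵢ > 0 one has wᵢ ≥ S − wᵢ (row dominance), then the number M of indices with wᵢ > 0 satisfies M ≤ 2; and if M = 2, the two nonzero weights are equal (hence both equal 1/√2), while if M = 1 the nonzero weight is 1. -/
theorem generalized_W_row_dominance
    (n : ℕ) (hn : 1 ≤ n) (w : Fin n → ℝ) (hw : ∀ i, 0 ≤ w i)
    (hnorm : ∑ i, (w i) ^ 2 = 1)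
    (S : ℝ) (hS : S = ∑ i, w i)
    (hdom : ∀ i, 0 < w i → S - w i ≤ w i) :
    (Finset.univ.filter (fun i => 0 < w i)).card ≤ 2 ∧
    ((Finset.univ.filter (fun i => 0 < w i)).card = 2 →
      ∀ i, 0 < w i → w i = 1 / Real.sqrt 2) ∧
    ((Finset.univ.filter (fun i => 0 < w i)).card = 1 →
      ∀ i, 0 < w i → w i = 1) := by
  set P := Finset.univ.filter (fun i => 0 < w i) with hPdef
  have hP0 : ∀ i, i ∉ P → w i = 0 := by
    intro i hi
    simp only [hPdef, Finset.mem_filter, Finset.mem_univ, true_and] at hi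
    exact le_antisymm (not_lt.mp hi) (hw i)
  have hSsum : S = ∑ i ∈ P, w i := by
    rw [hS]
    exact (Finset.sum_subset P.subset_univ (fun i _ hi => hP0 i hi)).symm
  have hnormP : ∑ i ∈ P, (w i) ^ 2 = 1 := by
    rw [← hnorm]
    exact Finset.sum_subset P.subset_univ (fun i _ hi => by rw [hP0 i hi]; ring)
  have hmemP : ∀ i, 0 < w i → i ∈ P := by
    intro i hi; simp [hPdef, hi]
  -- key: sum of others bound
  have hsub : ∀ i ∈ P, S - w i = ∑ j ∈ P.erase i, w j := by
    intro i hi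
    rw [hSsum, ← Finset.add_sum_erase P w hi]; ring
  have hcard : P.card ≤ 2 := by
    by_contra h
    push_neg at h
    obtain ⟨a, b, c, ha, hb, hc, hab, hac, hbc⟩ := Finset.two_lt_card_iff.mp h
    have hwa : 0 < w a := (Finset.mem_filter.mp ha).2
    have hwb : 0 < w b := (Finset.mem_filter.mp hb).2
    have hwc : 0 < w c := (Finset.mem_filter.mp hc).2
    have key : ∀ i j k : Fin n, i ∈ P → j ∈ P → k ∈ P → i ≠ j → i ≠ k → j ≠ k →
        w j + w k ≤ w i := by
      intro i j k hi hj hk hij hik hjk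
      have h1 : ({j, k} : Finset (Fin n)) ⊆ P.erase i := by
        intro x hx
        simp only [Finset.mem_insert, Finset.mem_singleton] at hx
        rcases hx with rfl | rfl
        · exact Finset.mem_erase.mpr ⟨hij.symm, hj⟩
        · exact Finset.mem_erase.mpr ⟨hik.symm, hk⟩
      have h2 : ∑ x ∈ ({j, k} : Finset (Fin n)), w x ≤ ∑ x ∈ P.erase i, w x :=
        Finset.sum_le_sum_of_subset_of_nonneg h1 (fun x _ _ => hw x)
      rw [Finset.sum_pair hjk] at h2
      have := hdom i (Finset.mem_filter.mp hi).2
      rw [hsub i hi] at this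
      linarith
    have k1 := key a b c ha hb hc hab hac hbc
    have k2 := key b a c hb ha hc hab.symm hbc hac
    linarith
  refine ⟨hcard, ?_, ?_⟩
  · intro h2 i hi
    obtain ⟨a, b, hab, hPab⟩ := Finset.card_eq_two.mp h2
    have ha : a ∈ P := by rw [hPab]; simp
    have hb : b ∈ P := by rw [hPab]; simp
    have hwa : 0 < w a := (Finset.mem_filter.mp ha).2
    have hwb : 0 < w b := (Finset.mem_filter.mp hb).2
    have hSab : S = w a + w b := by rw [hSsum, hPab, Finset.sum_pair hab]
    have hda := hdom a hwa
    have hdb := hdom b hwb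
    have heq : w a = w b := by rw [hSab] at hda hdb; linarith
    have hn2 : w a ^ 2 + w b ^ 2 = 1 := by
      rw [← hnormP, hPab, Finset.sum_pair hab]
    have hsq : w a ^ 2 = 1 / 2 := by rw [heq] at hn2 ⊢; linarith
    have hi' : i ∈ P := hmemP i hi
    rw [hPab] at hi'
    have hwi : w i = w a := by
      rcases Finset.mem_insert.mp hi' with rfl | h
      · rfl
      · rw [Finset.mem_singleton.mp h, heq]
    have hs2 : Real.sqrt 2 > 0 := Real.sqrt_pos.mpr (by norm_num)
    have hs2sq : Real.sqrt 2 ^ 2 = 2 := Real.sq_sqrt (by norm_num)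
    rw [hwi]
    have : (w a - 1 / Real.sqrt 2) * (w a + 1 / Real.sqrt 2) = 0 := by
      field_simp
      nlinarith
    rcases mul_eq_zero.mp this with h | h
    · linarith
    · nlinarith [one_div_pos.mpr hs2]
  · intro h1 i hi
    obtain ⟨a, hPa⟩ := Finset.card_eq_one.mp h1
    have hn1 : w a ^ 2 = 1 := by rw [← hnormP, hPa, Finset.sum_singleton]
    have hi' : i ∈ P := hmemP i hi
    rw [hPa, Finset.mem_singleton] at hi'
    subst hi'
    nlinarith [hw i]
end

section
/- Let A ⊆ F₂ⁿ be an affine subspace (a coset a + C of a linear subspace C) of dimension m such that all elements of A have the same Hamming weight. Then m ≤ n/2. -/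
open Finset

lemma cwadb_zmod2_add : ∀ u v : ZMod 2,
    u + v ≠ 0 ↔ ((u ≠ 0 ∧ v = 0) ∨ (u = 0 ∧ v ≠ 0)) := by decide

lemma cwadb_norm_zero {n : ℕ} (x : Fin n → ZMod 2) (h : hammingNorm x = 0) : x = 0 := by
  funext i
  by_contra hxi
  have hi : i ∈ Finset.univ.filter (fun i => x i ≠ 0) := by
    simp only [mem_filter, mem_univ, true_and]; exact hxi
  have := Finset.card_pos.mpr ⟨i, hi⟩
  unfold hammingNorm at h
  simp only [Finset.filter_congr_decidable] at h this
  omega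

lemma cwadb_disjoint {n : ℕ} (a x : Fin n → ZMod 2)
    (hd : ∀ i, a i ≠ 0 → x i = 0)
    (h : hammingNorm (a + x) = hammingNorm a) : x = 0 := by
  have hfilter : Finset.univ.filter (fun i => (a + x) i ≠ 0)
      = Finset.univ.filter (fun i => a i ≠ 0) ∪ Finset.univ.filter (fun i => x i ≠ 0) := by
    ext i
    simp only [mem_filter, mem_union, mem_univ, true_and, Pi.add_apply]
    rw [cwadb_zmod2_add (a i) (x i)]
    constructor
    · rintro (⟨h1, _⟩ | ⟨_, h2⟩)
      · exact Or.inl h1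
      · exact Or.inr h2
    · rintro (h1 | h2)
      · exact Or.inl ⟨h1, hd i h1⟩
      · right; refine ⟨?_, h2⟩
        by_contra ha
        exact h2 (hd i ha)
  have hdisj : Disjoint (Finset.univ.filter (fun i => a i ≠ 0))
      (Finset.univ.filter (fun i => x i ≠ 0)) := by
    rw [Finset.disjoint_left]
    intro i hi hix
    simp only [mem_filter, mem_univ, true_and] at hi hix
    exact hix (hd i hi)
  have hcard : hammingNorm (a + x) = hammingNorm a + hammingNorm x := by
    unfold hammingNorm
    simp only [Finset.filter_congr_decidable]
    rw [hfilter, Finset.card_union_of_disjoint hdisj]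
  apply cwadb_norm_zero
  omega

lemma cwadb_subset {n : ℕ} (a x : Fin n → ZMod 2)
    (hs : ∀ i, a i = 0 → x i = 0)
    (h : hammingNorm (a + x) = hammingNorm a) : x = 0 := by
  have hsub : Finset.univ.filter (fun i => x i ≠ 0)
      ⊆ Finset.univ.filter (fun i => a i ≠ 0) := by
    intro i hi
    simp only [mem_filter, mem_univ, true_and] at hi ⊢
    by_contra ha
    exact hi (hs i ha)
  have hfilter : Finset.univ.filter (fun i => (a + x) i ≠ 0)
      = Finset.univ.filter (fun i => a i ≠ 0) \ Finset.univ.filter (fun i => x i ≠ 0) := by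
    ext i
    simp only [mem_filter, mem_sdiff, mem_univ, true_and, Pi.add_apply, not_not]
    rw [cwadb_zmod2_add (a i) (x i)]
    constructor
    · rintro (⟨h1, h2⟩ | ⟨h1, h2⟩)
      · exact ⟨h1, h2⟩
      · exact absurd (hs i h1) h2
    · rintro ⟨h1, h2⟩
      exact Or.inl ⟨h1, h2⟩
  have hcard : hammingNorm (a + x) = hammingNorm a - hammingNorm x := by
    unfold hammingNorm
    simp only [Finset.filter_congr_decidable]
    rw [hfilter, Finset.card_sdiff_of_subset hsub]
  have hle := Finset.card_le_card hsub
  apply cwadb_norm_zero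
  unfold hammingNorm at hcard h hle ⊢
  simp only [Finset.filter_congr_decidable] at *
  omega

theorem constant_weight_affine_dim_bound
    (n m : ℕ) (C : Submodule (ZMod 2) (Fin n → ZMod 2))
    (hdim : Module.finrank (ZMod 2) C = m)
    (a : Fin n → ZMod 2)
    (hconst : ∀ x ∈ C, ∀ y ∈ C, hammingNorm (a + x) = hammingNorm (a + y)) :
    2 * m ≤ n := by
  classical
  set S : Finset (Fin n) := Finset.univ.filter (fun i => a i ≠ 0) with hS
  have hnorm : ∀ x ∈ C, hammingNorm (a + x) = hammingNorm a := by
    intro x hx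
    have := hconst x hx 0 C.zero_mem
    simpa using this
  have key : ∀ (T : Finset (Fin n)),
      (∀ x : Fin n → ZMod 2, x ∈ C → (∀ i ∈ T, x i = 0) → x = 0) →
      m ≤ T.card := by
    intro T hinj
    let F : (Fin n → ZMod 2) →ₗ[ZMod 2] ({i // i ∈ T} → ZMod 2) :=
      LinearMap.funLeft (ZMod 2) (ZMod 2) (fun i => i.1)
    let G := F.comp C.subtype
    have hGinj : Function.Injective G := by
      rw [← LinearMap.ker_eq_bot, LinearMap.ker_eq_bot']
      intro c hc
      have hc' : ∀ i ∈ T, (c : Fin n → ZMod 2) i = 0 := by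
        intro i hi
        have := congrFun hc ⟨i, hi⟩
        simpa [G, F, LinearMap.funLeft] using this
      exact Subtype.ext (hinj c c.2 hc')
    have hb := LinearMap.finrank_le_finrank_of_injective hGinj
    rw [hdim] at hb
    rw [Module.finrank_fintype_fun_eq_card, Fintype.card_coe] at hb
    exact hb
  have h1 : m ≤ S.card := by
    apply key
    intro x hx hxz
    refine cwadb_disjoint a x ?_ (hnorm x hx)
    intro i hi
    exact hxz i (by simpa [hS] using hi)
  have h2 : m ≤ Sᶜ.card := by
    apply key
    intro x hx hxz
    refine cwadb_subset a x ?_ (hnorm x hx)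
    intro i hi
    exact hxz i (by simpa [hS] using hi)
  have h3 := Finset.card_add_card_compl S
  have h4 : Fintype.card (Fin n) = n := Fintype.card_fin n
  omega
end

section
/- Fix r ∈ (0,1), n ≥ 2, and set τ := ln(1/r), γ₊ := 1 − r^{2/n}. Then γ₊ ≤ 2τ/n. Moreover, defining f_n(γ) := α² + β²γⁿ − αβ(1−γ)^{n/2} with α = r/√(1+r²), β = 1/√(1+r²), one has f_n'(γ) ≥ (n/2)·αβ·r^{1−2/n} for all γ ∈ [0, γ₊], and consequently the window width Δ_n := γ₊ − γ₋ (where γ₋ is the unique zero of f_n in (0, γ₊)) satisfies Δ_n ≤ (2/n)·r^{2/n − 2}·γ₊ⁿ. -/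
theorem stabilizer_window_width_bound
    (n : ℕ) (hn : 2 ≤ n) (r : ℝ) (hr0 : 0 < r) (hr1 : r < 1)
    (τ : ℝ) (hτ : τ = Real.log (1 / r))
    (γp : ℝ) (hγp : γp = 1 - r ^ (2 / (n : ℝ)))
    (α β : ℝ) (hα : α = r / Real.sqrt (1 + r ^ 2))
    (hβ : β = 1 / Real.sqrt (1 + r ^ 2))
    (f : ℝ → ℝ)
    (hf : f = fun γ => α ^ 2 + β ^ 2 * γ ^ (n : ℝ) - α * β * (1 - γ) ^ ((n : ℝ) / 2)) :
    γp ≤ 2 * τ / n ∧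
    (∀ γ ∈ Set.Icc (0 : ℝ) γp,
      (n : ℝ) / 2 * (α * β) * r ^ (1 - 2 / (n : ℝ)) ≤ deriv f γ) ∧
    (∀ γm ∈ Set.Ioo (0 : ℝ) γp, f γm = 0 →
      γp - γm ≤ 2 / n * r ^ (2 / (n : ℝ) - 2) * γp ^ (n : ℝ)) := by
  have hn0 : (0:ℝ) < n := by positivity
  have hn2 : (2:ℝ) ≤ n := by exact_mod_cast hn
  have hnne : (n:ℝ) ≠ 0 := ne_of_gt hn0
  have hr2n : 0 < r ^ (2/(n:ℝ)) := Real.rpow_pos_of_pos hr0 _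
  have hr2n1 : r ^ (2/(n:ℝ)) ≤ 1 := Real.rpow_le_one hr0.le hr1.le (by positivity)
  have hγp0 : 0 ≤ γp := by rw [hγp]; linarith
  have hγp1 : γp < 1 := by rw [hγp]; linarith
  have hs : (0:ℝ) < 1 + r^2 := by positivity
  have hms : Real.sqrt (1+r^2) * Real.sqrt (1+r^2) = 1 + r^2 := Real.mul_self_sqrt hs.le
  have hsne : Real.sqrt (1+r^2) ≠ 0 := by positivity
  have hαβ : α * β = r / (1 + r^2) := by
    rw [hα, hβ]; field_simp; rw [Real.sq_sqrt (by positivity)]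
  have hβ2 : β^2 = 1/(1+r^2) := by
    rw [hβ]; rw [div_pow, one_pow, sq, hms]
  have hα2 : α^2 = r^2/(1+r^2) := by
    rw [hα]; rw [div_pow, sq (Real.sqrt (1+r^2)), hms]
  have hαβpos : 0 < α * β := by rw [hαβ]; positivity
  -- derivative
  set F : ℝ → ℝ := fun x => β^2*((n:ℝ)*x^(n-1)) + α*β*((n:ℝ)/2*(1-x)^((n:ℝ)/2-1)) with hF
  have hf' : f = fun γ : ℝ => α ^ 2 + β ^ 2 * γ ^ n - α * β * (1 - γ) ^ ((n : ℝ) / 2) := by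
    rw [hf]; funext x; rw [Real.rpow_natCast]
  have key : ∀ γ : ℝ, 0 < 1 - γ → HasDerivAt f (F γ) γ := by
    intro γ hγ
    have h1 : HasDerivAt (fun x : ℝ => x ^ n) ((n:ℝ) * γ^(n-1)) γ := hasDerivAt_pow n γ
    have h2 : HasDerivAt (fun x : ℝ => (1 - x)) (-1) γ := (hasDerivAt_id γ).const_sub 1
    have h3 : HasDerivAt (fun x : ℝ => (1-x) ^ ((n:ℝ)/2))
        (((n:ℝ)/2 * (1-γ)^((n:ℝ)/2-1)) * (-1)) γ := by
      have := (Real.hasDerivAt_rpow_const (x := 1-γ) (p := (n:ℝ)/2) (Or.inl hγ.ne')).comp γ h2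
      simpa [Function.comp_def] using this
    have h4 := ((h1.const_mul (β^2)).const_add (α^2)).sub (h3.const_mul (α*β))
    rw [hf']
    refine h4.congr_deriv ?_
    simp only [hF]; ring
  have hFbound : ∀ γ ∈ Set.Icc (0:ℝ) γp,
      (n:ℝ)/2*(α*β)*r^(1-2/(n:ℝ)) ≤ F γ := by
    rintro γ ⟨hγ0, hγle⟩
    have hbase : r ^ (2/(n:ℝ)) ≤ 1 - γ := by rw [hγp] at hγle; linarith
    have h1γ : 0 < 1 - γ := lt_of_lt_of_le hr2n hbase
    have hexp : (0:ℝ) ≤ (n:ℝ)/2 - 1 := by linarith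
    have h5 : r ^ (1 - 2/(n:ℝ)) ≤ (1-γ)^((n:ℝ)/2-1) := by
      calc r ^ (1-2/(n:ℝ)) = (r ^ (2/(n:ℝ))) ^ ((n:ℝ)/2-1) := by
            rw [← Real.rpow_mul hr0.le]; congr 1; field_simp
        _ ≤ (1-γ)^((n:ℝ)/2-1) := Real.rpow_le_rpow hr2n.le hbase hexp
    have hpos : 0 ≤ β^2*((n:ℝ)*γ^(n-1)) := by positivity
    have := mul_le_mul_of_nonneg_left h5 (by positivity : (0:ℝ) ≤ (n:ℝ)/2*(α*β))
    simp only [hF]; nlinarith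
  refine ⟨?_, ?_, ?_⟩
  · -- part 1
    rw [hγp, hτ]
    have he : r ^ (2/(n:ℝ)) = Real.exp ((2/(n:ℝ)) * Real.log r) := by
      rw [Real.rpow_def_of_pos hr0, mul_comm]
    have h := Real.add_one_le_exp ((2/(n:ℝ)) * Real.log r)
    rw [he, Real.log_div one_ne_zero (ne_of_gt hr0), Real.log_one]
    have heq : 2*(0 - Real.log r)/(n:ℝ) = -((2/(n:ℝ))*Real.log r) := by field_simp; ring
    rw [heq]; linarith
  · -- part 2
    rintro γ hγ
    have h1γ : 0 < 1 - γ := by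
      have := hγ.2; linarith
    rw [(key γ h1γ).deriv]
    exact hFbound γ hγ
  · -- part 3
    rintro γm ⟨hγm0, hγmlt⟩ hfγm
    have hcont : ContinuousOn f (Set.Icc γm γp) := fun x hx =>
      (key x (by have := hx.2; linarith)).continuousAt.continuousWithinAt
    have hderiv : ∀ x ∈ Set.Ioo γm γp, HasDerivAt f (F x) x := fun x hx =>
      key x (by have := hx.2; linarith)
    obtain ⟨ξ, hξ, hξeq⟩ := exists_hasDerivAt_eq_slope f F hγmlt hcont hderiv
    have h1γp : 1 - γp = r ^ (2/(n:ℝ)) := by rw [hγp]; ring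
    have hfγp : f γp = β^2 * γp ^ (n:ℝ) := by
      rw [hf]; simp only
      rw [h1γp, ← Real.rpow_mul hr0.le]
      have he1 : 2/(n:ℝ) * ((n:ℝ)/2) = 1 := by field_simp
      rw [he1, Real.rpow_one, hα2, hαβ]; ring
    have hd : 0 < γp - γm := by linarith
    have hFmul : F ξ * (γp - γm) = f γp := by
      rw [hξeq, hfγm, sub_zero, div_mul_cancel₀ _ (ne_of_gt hd)]
    have hξmem : ξ ∈ Set.Icc (0:ℝ) γp := ⟨le_trans hγm0.le hξ.1.le, hξ.2.le⟩
    have h6 : (n:ℝ)/2*(α*β)*r^(1-2/(n:ℝ)) * (γp - γm) ≤ β^2 * γp ^ (n:ℝ) := by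
      calc (n:ℝ)/2*(α*β)*r^(1-2/(n:ℝ)) * (γp - γm) ≤ F ξ * (γp - γm) :=
            mul_le_mul_of_nonneg_right (hFbound ξ hξmem) hd.le
        _ = f γp := hFmul
        _ = β^2 * γp ^ (n:ℝ) := hfγp
    have hrr : r * r ^ (1-2/(n:ℝ)) * r ^ (2/(n:ℝ)-2) = 1 := by
      rw [show r * r ^ (1-2/(n:ℝ)) = r^(1:ℝ) * r ^ (1-2/(n:ℝ)) by rw [Real.rpow_one],
        ← Real.rpow_add hr0, ← Real.rpow_add hr0]
      rw [show (1:ℝ)+(1-2/(n:ℝ))+(2/(n:ℝ)-2) = 0 by ring, Real.rpow_zero]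
    have hn2' : ((n:ℝ)/2)*(2/(n:ℝ)) = 1 := by field_simp
    have hkey2 : ((n:ℝ)/2*(α*β)*r^(1-2/(n:ℝ))) * (2/(n:ℝ)*r^(2/(n:ℝ)-2)*γp^(n:ℝ)) =
        β^2*γp^(n:ℝ) := by
      rw [hαβ]
      rw [show (n:ℝ)/2*(r/(1+r^2))*r^(1-2/(n:ℝ)) * (2/(n:ℝ)*r^(2/(n:ℝ)-2)*γp^(n:ℝ)) =
        (r * r^(1-2/(n:ℝ)) * r^(2/(n:ℝ)-2)) * (((n:ℝ)/2)*(2/(n:ℝ))) * (γp^(n:ℝ) * (1/(1+r^2))) by ring]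
      rw [hrr, hn2', hβ2]; ring
    rw [← hkey2] at h6
    have hc : 0 < (n:ℝ)/2*(α*β)*r^(1-2/(n:ℝ)) := by positivity
    exact le_of_mul_le_mul_left h6 hc
end

section
/- Fix n ≥ 2 and r ∈ (0,1), and define h_n(r) := 2r − (1 − r^{2/n})^{n/2} on (0,1). Then h_n is strictly increasing on (0,1), and its unique zero is r₁ := (1 + 2^{2/n})^{−n/2}. Consequently, 2r < (1 − r^{2/n})^{n/2} if and only if r < r₁. -/
theorem regime_boundary_h_function
    (n : ℕ) (hn : 2 ≤ n)
    (h : ℝ → ℝ)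
    (hh : h = fun r => 2 * r - (1 - r ^ (2 / (n : ℝ))) ^ ((n : ℝ) / 2))
    (r₁ : ℝ) (hr₁ : r₁ = (1 + 2 ^ (2 / (n : ℝ))) ^ (-(n : ℝ) / 2)) :
    StrictMonoOn h (Set.Ioo 0 1) ∧
    h r₁ = 0 ∧
    (∀ r ∈ Set.Ioo (0 : ℝ) 1, h r = 0 → r = r₁) ∧
    (∀ r ∈ Set.Ioo (0 : ℝ) 1,
      (2 * r < (1 - r ^ (2 / (n : ℝ))) ^ ((n : ℝ) / 2) ↔ r < r₁)) := by
  have hnpos : (0 : ℝ) < (n : ℝ) := by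
    have : 0 < n := lt_of_lt_of_le (by norm_num) hn
    exact_mod_cast this
  have hnne : (n : ℝ) ≠ 0 := ne_of_gt hnpos
  set a : ℝ := 2 / (n : ℝ) with ha_def
  have hapos : 0 < a := by positivity
  have hhalf : (0 : ℝ) < (n : ℝ) / 2 := by positivity
  have hexp : -(n : ℝ) / 2 = -((n : ℝ) / 2) := by ring
  -- strict monotonicity
  have hmono : StrictMonoOn h (Set.Ioo 0 1) := by
    intro x hx y hy hxy
    have hx0 : (0 : ℝ) < x := hx.1
    have hy0 : (0 : ℝ) < y := hy.1
    have hxa : x ^ a < y ^ a := Real.rpow_lt_rpow (le_of_lt hx0) hxy hapos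
    have hya1 : y ^ a < 1 := Real.rpow_lt_one (le_of_lt hy0) hy.2 hapos
    have h1 : (0 : ℝ) ≤ 1 - y ^ a := by linarith
    have h2 : (1 - y ^ a) ^ ((n : ℝ) / 2) < (1 - x ^ a) ^ ((n : ℝ) / 2) :=
      Real.rpow_lt_rpow h1 (by linarith) hhalf
    simp only [hh]
    linarith
  -- r₁ facts
  have h2a : (0 : ℝ) < (2 : ℝ) ^ a := Real.rpow_pos_of_pos (by norm_num) a
  set b : ℝ := 1 + 2 ^ a with hb_def
  have hb1 : (1 : ℝ) < b := by rw [hb_def]; linarith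
  have hb0 : (0 : ℝ) < b := by linarith
  have hr₁pos : 0 < r₁ := by rw [hr₁]; exact Real.rpow_pos_of_pos hb0 _
  have hr₁lt1 : r₁ < 1 := by
    rw [hr₁]
    exact Real.rpow_lt_one_of_one_lt_of_neg hb1 (by rw [hexp]; exact neg_lt_zero.mpr hhalf)
  have hr₁mem : r₁ ∈ Set.Ioo (0 : ℝ) 1 := ⟨hr₁pos, hr₁lt1⟩
  have han : a * ((n : ℝ) / 2) = 1 := by rw [ha_def]; field_simp
  have hr₁a : r₁ ^ a = b⁻¹ := by
    rw [hr₁, ← Real.rpow_mul (le_of_lt hb0)]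
    have : -(n : ℝ) / 2 * a = -1 := by rw [ha_def]; field_simp
    rw [this, Real.rpow_neg_one]
  have hval : h r₁ = 0 := by
    have h1r : 1 - r₁ ^ a = 2 ^ a * b⁻¹ := by
      rw [hr₁a]
      field_simp
      rw [hb_def]
      ring
    have key : (1 - r₁ ^ a) ^ ((n : ℝ) / 2) = 2 * r₁ := by
      rw [h1r, Real.mul_rpow (le_of_lt h2a) (by positivity : (0:ℝ) ≤ b⁻¹),
        ← Real.rpow_mul (by norm_num : (0:ℝ) ≤ 2), han, Real.rpow_one,
        Real.inv_rpow (le_of_lt hb0), ← Real.rpow_neg (le_of_lt hb0), hr₁, hexp]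
    simp only [hh]
    rw [key]
    ring
  refine ⟨hmono, hval, ?_, ?_⟩
  · intro r hr hr0
    exact hmono.injOn hr hr₁mem (by rw [hr0, hval])
  · intro r hr
    have hreq : h r = 2 * r - (1 - r ^ a) ^ ((n : ℝ) / 2) := by rw [hh]
    constructor
    · intro hlt
      by_contra hge
      push_neg at hge
      rcases eq_or_lt_of_le hge with heq | hlt'
      · rw [heq] at hval
        rw [hreq] at hval
        linarith
      · have := hmono hr₁mem hr hlt'
        rw [hval, hreq] at this
        linarith
    · intro hlt
      have := hmono hr hr₁mem hlt
      rw [hval, hreq] at this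
      linarith
end
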